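/- arXiv:2410.14229 — 2 statements merged into one kernel-verified Lean document; each statement's English description precedes it below -/
import Mathlib

section
/- For the random walk in potential V started at b with a < b ≤ c, the probability that the entrance time to a exceeds the hitting time of c equals (W(b) - W(a)) / (W(c) - W(a)). -/
open MeasureTheory
open scoped ENNReal NNReal

/-- Probability of a step from `i` to `j` for the random walk in potential `V`:
`p(i,i+1) = 1/(1+exp(V i - V (i-1)))`, `p(i,i-1) = 1 - p(i,i+1)`, `0` otherwise. -/
noncomputable def stepProb (V : ℤ → ℝ) (i j : ℤ) : ℝ :=
  if j = i + 1 then 1 / (1 + Real.exp (V i - V (i - 1)))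
  else if j = i - 1 then 1 - 1 / (1 + Real.exp (V i - V (i - 1)))
  else 0

/-- `P b` is the law of the nearest-neighbour Markov chain on `ℤ` started at `b`
with transition probabilities `stepProb V`, characterized through its
finite-dimensional distributions. -/
def IsRWInPotential (V : ℤ → ℝ) (P : ℤ → Measure (ℕ → ℤ)) : Prop :=
  (∀ b, IsProbabilityMeasure (P b)) ∧
  ∀ (b : ℤ) (n : ℕ) (x : ℕ → ℤ), x 0 = b →
    (P b {w | ∀ k ≤ n, w k = x k}).toReal
      = ∏ k ∈ Finset.range n, stepProb V (x k) (x (k + 1))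

/-- The scale function `W`: `W 0 = 0`, `W n = ∑_{0 ≤ k < n} e^{V k}` for `n ≥ 1`,
`W (-n) = -∑_{1 ≤ k ≤ n} e^{V (-k)}` for `n ≥ 1`. -/
noncomputable def Wfun (V : ℤ → ℝ) (z : ℤ) : ℝ :=
  if 0 ≤ z then ∑ k ∈ Finset.range z.toNat, Real.exp (V (k : ℤ))
  else -∑ k ∈ Finset.range (-z).toNat, Real.exp (V (-((k : ℤ) + 1)))

/-- Entrance time `H_a = inf {n ≥ 1 : X_n = a}`, with value `⊤` if no such time exists. -/
noncomputable def entranceTime (a : ℤ) (w : ℕ → ℤ) : ℕ∞ :=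
  sInf ((fun m : ℕ => (m : ℕ∞)) '' {m : ℕ | 1 ≤ m ∧ w m = a})

/-- Hitting time `H̃_a = inf {n ≥ 0 : X_n = a}`, with value `⊤` if no such time exists. -/
noncomputable def hittingTime (a : ℤ) (w : ℕ → ℤ) : ℕ∞ :=
  sInf ((fun m : ℕ => (m : ℕ∞)) '' {m : ℕ | w m = a})

/-- Number of visits of the path `w` to the site `a`, as an extended nonnegative real. -/
noncomputable def numVisits (a : ℤ) (w : ℕ → ℤ) : ℝ≥0∞ :=
  ∑' n : ℕ, if w n = a then (1 : ℝ≥0∞) else 0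


open Filter

noncomputable def pup (V : ℤ → ℝ) (i : ℤ) : ℝ := 1 / (1 + Real.exp (V i - V (i - 1)))

lemma pup_pos (V : ℤ → ℝ) (i : ℤ) : 0 < pup V i := by
  have := Real.exp_pos (V i - V (i - 1)); unfold pup; positivity

lemma pup_lt_one (V : ℤ → ℝ) (i : ℤ) : pup V i < 1 := by
  have h := Real.exp_pos (V i - V (i - 1))
  rw [pup, div_lt_one (by linarith)]; linarith

lemma step_up (V : ℤ → ℝ) (i : ℤ) : stepProb V i (i + 1) = pup V i := by
  simp [stepProb, pup]

lemma step_down (V : ℤ → ℝ) (i : ℤ) : stepProb V i (i - 1) = 1 - pup V i := by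
  have : i - 1 ≠ i + 1 := by omega
  simp [stepProb, pup, this]

lemma step_eq_zero (V : ℤ → ℝ) {i j : ℤ} (h1 : j ≠ i + 1) (h2 : j ≠ i - 1) :
    stepProb V i j = 0 := by simp [stepProb, h1, h2]

lemma step_nonneg (V : ℤ → ℝ) (i j : ℤ) : 0 ≤ stepProb V i j := by
  rcases eq_or_ne j (i+1) with h | h
  · rw [h, step_up]; exact (pup_pos V i).le
  rcases eq_or_ne j (i-1) with h2 | h2
  · rw [h2, step_down]; linarith [pup_lt_one V i]
  · rw [step_eq_zero V h h2]

lemma Wfun_succ (V : ℤ → ℝ) (z : ℤ) : Wfun V (z + 1) = Wfun V z + Real.exp (V z) := by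
  rcases le_or_gt 0 z with hz | hz
  · have h1 : (0:ℤ) ≤ z + 1 := by omega
    have h2 : (z+1).toNat = z.toNat + 1 := by omega
    rw [Wfun, Wfun, if_pos h1, if_pos hz, h2, Finset.sum_range_succ]
    rw [Int.toNat_of_nonneg hz]
  · rcases eq_or_lt_of_le (by omega : z + 1 ≤ 0) with h0 | h0
    · have hz1 : z = -1 := by omega
      subst hz1
      simp [Wfun]
    · have h1 : ¬ (0:ℤ) ≤ z + 1 := by omega
      have h2 : ¬ (0:ℤ) ≤ z := by omega
      have h3 : (-z).toNat = (-(z+1)).toNat + 1 := by omega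
      rw [Wfun, Wfun, if_neg h1, if_neg h2, h3, Finset.sum_range_succ]
      have h4 : -(((-(z+1)).toNat : ℤ) + 1) = z := by omega
      rw [h4]; ring

lemma Wfun_strictMono (V : ℤ → ℝ) : StrictMono (Wfun V) := by
  apply strictMono_int_of_lt_succ
  intro z
  rw [Wfun_succ]
  linarith [Real.exp_pos (V z)]

lemma Wfun_harmonic (V : ℤ → ℝ) (i : ℤ) :
    pup V i * Wfun V (i + 1) + (1 - pup V i) * Wfun V (i - 1) = Wfun V i := by
  have h1 : Wfun V (i - 1 + 1) = Wfun V (i-1) + Real.exp (V (i-1)) := Wfun_succ V (i-1)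
  rw [show i - 1 + 1 = i by ring] at h1
  rw [Wfun_succ V i, h1]
  have hE : Real.exp (V i - V (i-1)) = Real.exp (V i) / Real.exp (V (i-1)) := Real.exp_sub _ _
  have hQ : (0:ℝ) < Real.exp (V (i-1)) := Real.exp_pos _
  have hP : (0:ℝ) < Real.exp (V i) := Real.exp_pos _
  rw [pup, hE]
  field_simp
  ring

noncomputable def uu (V : ℤ → ℝ) (a c : ℤ) : ℕ → ℤ → ℝ
  | 0 => fun i => if i = c then 1 else 0
  | n+1 => fun i => if i = c then 1 else if i = a then 0
      else pup V i * uu V a c n (i+1) + (1 - pup V i) * uu V a c n (i-1)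

noncomputable def ss (V : ℤ → ℝ) (a c : ℤ) : ℕ → ℤ → ℝ
  | 0 => fun i => if i = c ∨ i = a then 0 else 1
  | n+1 => fun i => if i = c ∨ i = a then 0
      else pup V i * ss V a c n (i+1) + (1 - pup V i) * ss V a c n (i-1)

section
variable (V : ℤ → ℝ) (a c : ℤ)

noncomputable def hh (z : ℤ) : ℝ := (Wfun V z - Wfun V a) / (Wfun V c - Wfun V a)

variable (hac : a < c)
include hac

lemma D_pos : 0 < Wfun V c - Wfun V a := sub_pos.2 (Wfun_strictMono V hac)

lemma hh_a : hh V a c a = 0 := by simp [hh]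

lemma hh_c : hh V a c c = 1 := by
  rw [hh, div_self (ne_of_gt (D_pos V a c hac))]

lemma hh_mono : Monotone (hh V a c) := by
  intro x y hxy
  have hD := D_pos V a c hac
  unfold hh
  gcongr
  exact (Wfun_strictMono V).monotone hxy

lemma hh_harmonic (i : ℤ) :
    pup V i * hh V a c (i+1) + (1 - pup V i) * hh V a c (i-1) = hh V a c i := by
  have hD := ne_of_gt (D_pos V a c hac)
  have := Wfun_harmonic V i
  have h1 : (0:ℝ) ≤ 1 - pup V i := by linarith [pup_lt_one V i]
  simp only [hh]
  rw [← this, mul_div_assoc', mul_div_assoc', ← add_div]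
  congr 1
  ring

lemma hh_mem (i : ℤ) (hi : i ∈ Set.Icc a c) : 0 ≤ hh V a c i ∧ hh V a c i ≤ 1 := by
  obtain ⟨h1, h2⟩ := hi
  constructor
  · apply div_nonneg _ (D_pos V a c hac).le
    exact sub_nonneg.2 ((Wfun_strictMono V).monotone h1)
  · rw [hh, div_le_one (D_pos V a c hac)]
    exact sub_le_sub_right ((Wfun_strictMono V).monotone h2) _
end

section
variable (V : ℤ → ℝ) {a c : ℤ} (hac : a < c)
include hac

lemma pup_mem (i : ℤ) : 0 ≤ pup V i ∧ 1 - pup V i ≥ 0 :=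
  ⟨(pup_pos V i).le, by linarith [pup_lt_one V i]⟩

lemma ss_nonneg : ∀ n, ∀ i ∈ Set.Icc a c, 0 ≤ ss V a c n i := by
  intro n
  induction n with
  | zero => intro i _; simp only [ss]; split <;> norm_num
  | succ n ih =>
    intro i hi
    simp only [ss]
    split
    · norm_num
    · rename_i h
      push_neg at h
      have h1 : i + 1 ∈ Set.Icc a c := by
        simp only [Set.mem_Icc] at hi ⊢; omega
      have h2 : i - 1 ∈ Set.Icc a c := by
        simp only [Set.mem_Icc] at hi ⊢; omega
      have := ih _ h1; have := ih _ h2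
      have := pup_pos V i; have := pup_lt_one V i
      nlinarith

lemma ss_le_one : ∀ n, ∀ i ∈ Set.Icc a c, ss V a c n i ≤ 1 := by
  intro n
  induction n with
  | zero => intro i _; simp only [ss]; split <;> norm_num
  | succ n ih =>
    intro i hi
    simp only [ss]
    split
    · norm_num
    · rename_i h
      push_neg at h
      have h1 : i + 1 ∈ Set.Icc a c := by simp only [Set.mem_Icc] at hi ⊢; omega
      have h2 : i - 1 ∈ Set.Icc a c := by simp only [Set.mem_Icc] at hi ⊢; omega
      have := ih _ h1; have := ih _ h2
      have := pup_pos V i; have := pup_lt_one V i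
      nlinarith

lemma uu_diff : ∀ n, ∀ i ∈ Set.Icc a c,
    0 ≤ hh V a c i - uu V a c n i ∧ hh V a c i - uu V a c n i ≤ ss V a c n i := by
  intro n
  induction n with
  | zero =>
    intro i hi
    rcases eq_or_ne i c with hc | hc
    · simp [uu, ss, hc, hh_c V a c hac, (by omega : ¬ (c = a))]
    rcases eq_or_ne i a with ha2 | ha2
    · have hne : ¬ (a = c) := by omega
      simp [uu, ss, ha2, hh_a V a c hac, hne]
    obtain ⟨g0, g1⟩ := hh_mem V a c hac i hi
    simp only [uu, ss, if_neg hc, if_neg (not_or_intro hc ha2)]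
    constructor <;> linarith
  | succ n ih =>
    intro i hi
    rcases eq_or_ne i c with hc | hc
    · simp [uu, ss, hc, hh_c V a c hac, (by omega : ¬ (c = a))]
    rcases eq_or_ne i a with ha2 | ha2
    · have hne : ¬ (a = c) := by omega
      simp [uu, ss, ha2, hh_a V a c hac, hne]
    have h1 : i + 1 ∈ Set.Icc a c := by simp only [Set.mem_Icc] at hi ⊢; omega
    have h2 : i - 1 ∈ Set.Icc a c := by simp only [Set.mem_Icc] at hi ⊢; omega
    obtain ⟨l1, r1⟩ := ih _ h1
    obtain ⟨l2, r2⟩ := ih _ h2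
    have key : hh V a c i - (pup V i * uu V a c n (i+1) + (1 - pup V i) * uu V a c n (i-1))
        = pup V i * (hh V a c (i+1) - uu V a c n (i+1))
          + (1 - pup V i) * (hh V a c (i-1) - uu V a c n (i-1)) := by
      linear_combination -(hh_harmonic V a c hac i)
    simp only [uu, ss, if_neg hc, if_neg ha2, if_neg (not_or_intro hc ha2)]
    rw [key]
    have := pup_pos V i; have := pup_lt_one V i
    constructor
    · nlinarith
    · nlinarith
end

section
variable (V : ℤ → ℝ) {a c : ℤ} (hac : a < c)

noncomputable def dlt : ℝ := ∏ j ∈ Finset.Ico (a+1) c, pup V j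

omit hac in
lemma dlt_pos : 0 < dlt V (a := a) (c := c) :=
  Finset.prod_pos fun j _ => pup_pos V j

omit hac in
lemma dlt_le_one : dlt V (a := a) (c := c) ≤ 1 :=
  Finset.prod_le_one (fun j _ => (pup_pos V j).le) (fun j _ => (pup_lt_one V j).le)

omit hac in
lemma prodIco_le_one (i : ℤ) : ∏ j ∈ Finset.Ico i c, pup V j ≤ 1 :=
  Finset.prod_le_one (fun j _ => (pup_pos V j).le) (fun j _ => (pup_lt_one V j).le)

omit hac in
lemma dlt_le_prodIco {i : ℤ} (h1 : a + 1 ≤ i) (h2 : i ≤ c) :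
    dlt V (a := a) (c := c) ≤ ∏ j ∈ Finset.Ico i c, pup V j := by
  have hsplit : Finset.Ico (a+1) i ∪ Finset.Ico i c = Finset.Ico (a+1) c :=
    Finset.Ico_union_Ico_eq_Ico h1 h2
  have hdisj : Disjoint (Finset.Ico (a+1) i) (Finset.Ico i c) :=
    Finset.Ico_disjoint_Ico_consecutive _ _ _
  have : dlt V (a := a) (c := c)
      = (∏ j ∈ Finset.Ico (a+1) i, pup V j) * ∏ j ∈ Finset.Ico i c, pup V j := by
    rw [dlt, ← hsplit, Finset.prod_union hdisj]
  rw [this]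
  have hp : 0 < ∏ j ∈ Finset.Ico i c, pup V j := Finset.prod_pos fun j _ => pup_pos V j
  nlinarith [Finset.prod_le_one (s := Finset.Ico (a+1) i)
      (fun j _ => (pup_pos V j).le) (fun j _ => (pup_lt_one V j).le),
    Finset.prod_pos (s := Finset.Ico (a+1) i) (fun j (_ : j ∈ _) => pup_pos V j)]

include hac

lemma ss_boundary (n : ℕ) : ss V a c n a = 0 ∧ ss V a c n c = 0 := by
  cases n <;> simp [ss]

lemma ss_step : ∀ n, ∀ i ∈ Set.Icc a c, ss V a c (n+1) i ≤ ss V a c n i := by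
  intro n
  induction n with
  | zero =>
    intro i hi
    simp only [ss]
    split
    · norm_num
    · split_ifs <;> nlinarith [pup_pos V i, pup_lt_one V i]
  | succ n ih =>
    intro i hi
    rcases eq_or_ne i c with hc | hc
    · simp [hc, (ss_boundary V hac _).2]
    rcases eq_or_ne i a with ha2 | ha2
    · simp [ha2, (ss_boundary V hac _).1]
    have h1 : i + 1 ∈ Set.Icc a c := by simp only [Set.mem_Icc] at hi ⊢; omega
    have h2 : i - 1 ∈ Set.Icc a c := by simp only [Set.mem_Icc] at hi ⊢; omega
    have e1 : ss V a c (n+1+1) i = pup V i * ss V a c (n+1) (i+1)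
        + (1 - pup V i) * ss V a c (n+1) (i-1) := by
      simp only [ss, if_neg (not_or_intro hc ha2)]
    have e2 : ss V a c (n+1) i = pup V i * ss V a c n (i+1)
        + (1 - pup V i) * ss V a c n (i-1) := by
      simp only [ss, if_neg (not_or_intro hc ha2)]
    rw [e1, e2]
    have := ih _ h1; have := ih _ h2
    have := pup_pos V i; have := pup_lt_one V i
    nlinarith

lemma ss_anti {n n' : ℕ} (h : n ≤ n') : ∀ i ∈ Set.Icc a c, ss V a c n' i ≤ ss V a c n i := by
  induction n', h using Nat.le_induction with
  | base => intro i _; exact le_refl _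
  | succ n' hn ih =>
    intro i hi
    exact (ss_step V hac n' i hi).trans (ih i hi)

lemma ss_B2 : ∀ m : ℕ, ∀ i, i = c - m → i ∈ Set.Icc a c →
    ss V a c m i ≤ 1 - ∏ j ∈ Finset.Ico i c, pup V j := by
  intro m
  induction m with
  | zero =>
    intro i he _
    have : i = c := by omega
    simp [this, ss]
  | succ m ih =>
    intro i he hi
    have hic : i < c := by omega
    have hc : i ≠ c := by omega
    rcases eq_or_ne i a with ha2 | ha2
    · rw [(by simp [ha2, (ss_boundary V hac _).1] : ss V a c (m+1) i = 0)]
      linarith [prodIco_le_one V (c := c) i]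
    have h1 : i + 1 ∈ Set.Icc a c := by simp only [Set.mem_Icc] at hi ⊢; omega
    have h2 : i - 1 ∈ Set.Icc a c := by simp only [Set.mem_Icc] at hi ⊢; omega
    have e2 : ss V a c (m+1) i = pup V i * ss V a c m (i+1)
        + (1 - pup V i) * ss V a c m (i-1) := by
      simp only [ss, if_neg (not_or_intro hc ha2)]
    have hins : Finset.Ico i c = insert i (Finset.Ico (i+1) c) := by
      ext j; simp only [Finset.mem_Ico, Finset.mem_insert]; omega
    have hnotmem : i ∉ Finset.Ico (i+1) c := by simp
    have hprod : ∏ j ∈ Finset.Ico i c, pup V j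
        = pup V i * ∏ j ∈ Finset.Ico (i+1) c, pup V j := by
      rw [hins, Finset.prod_insert hnotmem]
    have hIH := ih (i+1) (by omega) h1
    have hle1 := ss_le_one V hac m _ h2
    have := pup_pos V i; have := pup_lt_one V i
    rw [e2, hprod]
    nlinarith

lemma ss_L : ∀ i ∈ Set.Icc a c, ss V a c (c - a).toNat i ≤ 1 - dlt V (a := a) (c := c) := by
  intro i hi
  rcases eq_or_ne i c with hc | hc
  · rw [hc, (ss_boundary V hac _).2]; linarith [dlt_le_one V (a := a) (c := c)]
  rcases eq_or_ne i a with ha2 | ha2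
  · rw [ha2, (ss_boundary V hac _).1]; linarith [dlt_le_one V (a := a) (c := c)]
  have hm : (c - i).toNat ≤ (c - a).toNat := by
    simp only [Set.mem_Icc] at hi; omega
  have step1 := ss_anti V hac hm i hi
  have step2 := ss_B2 V hac (c - i).toNat i (by simp only [Set.mem_Icc] at hi; omega) hi
  have step3 := dlt_le_prodIco V (a := a) (c := c) (i := i)
    (by simp only [Set.mem_Icc] at hi; omega) (by simp only [Set.mem_Icc] at hi; omega)
  linarith

lemma ss_B3 : ∀ n, ∀ i ∈ Set.Icc a c,
    ss V a c (n + (c - a).toNat) i ≤ (1 - dlt V (a := a) (c := c)) * ss V a c n i := by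
  intro n
  induction n with
  | zero =>
    intro i hi
    rcases eq_or_ne i c with hc | hc
    · simp [hc, (ss_boundary V hac _).2]
    rcases eq_or_ne i a with ha2 | ha2
    · simp [ha2, (ss_boundary V hac _).1]
    have : ss V a c 0 i = 1 := by simp [ss, not_or_intro hc ha2]
    rw [this, mul_one, zero_add]
    exact ss_L V hac i hi
  | succ n ih =>
    intro i hi
    rcases eq_or_ne i c with hc | hc
    · simp [hc, (ss_boundary V hac _).2]
    rcases eq_or_ne i a with ha2 | ha2
    · simp [ha2, (ss_boundary V hac _).1]
    have h1 : i + 1 ∈ Set.Icc a c := by simp only [Set.mem_Icc] at hi ⊢; omega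
    have h2 : i - 1 ∈ Set.Icc a c := by simp only [Set.mem_Icc] at hi ⊢; omega
    have e1 : ss V a c (n + 1 + (c - a).toNat) i
        = pup V i * ss V a c (n + (c - a).toNat) (i+1)
          + (1 - pup V i) * ss V a c (n + (c - a).toNat) (i-1) := by
      rw [show n + 1 + (c - a).toNat = (n + (c - a).toNat) + 1 by ring]
      simp only [ss, if_neg (not_or_intro hc ha2)]
    have e2 : ss V a c (n+1) i = pup V i * ss V a c n (i+1)
        + (1 - pup V i) * ss V a c n (i-1) := by
      simp only [ss, if_neg (not_or_intro hc ha2)]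
    rw [e1, e2]
    have := ih _ h1; have := ih _ h2
    have := pup_pos V i; have := pup_lt_one V i
    nlinarith

lemma ss_pow (b : ℤ) (hb : b ∈ Set.Icc a c) :
    ∀ k, ss V a c (k * (c - a).toNat) b ≤ (1 - dlt V (a := a) (c := c))^k := by
  intro k
  induction k with
  | zero => simpa [ss] using ss_le_one V hac 0 b hb
  | succ k ih =>
    have h1 : (k+1) * (c - a).toNat = k * (c - a).toNat + (c - a).toNat := by ring
    rw [h1, pow_succ]
    calc ss V a c (k * (c - a).toNat + (c - a).toNat) b
        ≤ (1 - dlt V (a := a) (c := c)) * ss V a c (k * (c - a).toNat) b :=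
          ss_B3 V hac _ b hb
      _ ≤ (1 - dlt V (a := a) (c := c))^k * (1 - dlt V (a := a) (c := c)) := by
          rw [mul_comm]
          have h0 : 0 ≤ 1 - dlt V (a := a) (c := c) := by
            linarith [dlt_le_one V (a := a) (c := c)]
          exact mul_le_mul_of_nonneg_right ih h0

lemma ss_tendsto (b : ℤ) (hb : b ∈ Set.Icc a c) :
    Tendsto (fun n => ss V a c n b) atTop (nhds 0) := by
  set L := (c - a).toNat with hL
  have hL1 : 1 ≤ L := by omega
  set q := 1 - dlt V (a := a) (c := c) with hq
  have hq0 : 0 ≤ q := by linarith [dlt_le_one V (a := a) (c := c)]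
  have hq1 : q < 1 := by have := dlt_pos V (a := a) (c := c); linarith
  have hbound : ∀ n, ss V a c n b ≤ q ^ (n / L) := by
    intro n
    have h1 : (n / L) * L ≤ n := Nat.div_mul_le_self n L
    exact (ss_anti V hac h1 b hb).trans (ss_pow V hac b hb (n / L))
  have hdiv : Tendsto (fun n : ℕ => n / L) atTop atTop := by
    apply tendsto_atTop_atTop.2
    intro m
    exact ⟨m * L, fun n hn => Nat.le_div_iff_mul_le (by omega) |>.2 hn⟩
  have hpow : Tendsto (fun n : ℕ => q ^ (n / L)) atTop (nhds 0) :=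
    (tendsto_pow_atTop_nhds_zero_of_lt_one hq0 hq1).comp hdiv
  exact squeeze_zero (fun n => ss_nonneg V hac n b hb) hbound hpow
end

/-! ### Cylinder machinery -/

def Gset (a c : ℤ) (n : ℕ) : Set (ℕ → ℤ) :=
  {w | ∃ m ≤ n, w m = c ∧ ∀ k ≤ m, w k ≠ a}

lemma Gset_mono (a c : ℤ) : Monotone (Gset a c) := by
  intro n n' h w ⟨m, hm, h1, h2⟩
  exact ⟨m, hm.trans h, h1, h2⟩

lemma Gset_congr (a c : ℤ) (n : ℕ) {v w : ℕ → ℤ} (h : ∀ k ≤ n, v k = w k) :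
    v ∈ Gset a c n ↔ w ∈ Gset a c n := by
  constructor
  · rintro ⟨m, hm, h1, h2⟩
    exact ⟨m, hm, by rw [← h m hm]; exact h1,
      fun k hk => by rw [← h k (hk.trans hm)]; exact h2 k hk⟩
  · rintro ⟨m, hm, h1, h2⟩
    exact ⟨m, hm, by rw [h m hm]; exact h1,
      fun k hk => by rw [h k (hk.trans hm)]; exact h2 k hk⟩

lemma Gset_meas (a c : ℤ) (n : ℕ) : MeasurableSet (Gset a c n) := by
  have : Gset a c n = ⋃ m : ℕ, ⋃ (_ : m ≤ n),
      (((fun w : ℕ → ℤ => w m) ⁻¹' {c}) ∩ ⋂ k : ℕ, ⋂ (_ : k ≤ m),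
        ((fun w : ℕ → ℤ => w k) ⁻¹' {a})ᶜ) := by
    ext w
    simp only [Gset, Set.mem_setOf_eq, Set.mem_iUnion, Set.mem_inter_iff, Set.mem_preimage,
      Set.mem_singleton_iff, Set.mem_iInter, Set.mem_compl_iff]
    tauto
  rw [this]
  apply MeasurableSet.iUnion; intro m
  apply MeasurableSet.iUnion; intro _
  apply MeasurableSet.inter
  · exact measurable_pi_apply m (measurableSet_singleton c)
  · apply MeasurableSet.iInter; intro k
    apply MeasurableSet.iInter; intro _
    exact (measurable_pi_apply k (measurableSet_singleton a)).compl

lemma Gset_shift {a c : ℤ} (hac : a ≠ c) (n : ℕ) (w : ℕ → ℤ) :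
    w ∈ Gset a c (n+1) ↔ w 0 = c ∨ (w 0 ≠ a ∧ (fun k => w (k+1)) ∈ Gset a c n) := by
  constructor
  · rintro ⟨m, hm, h1, h2⟩
    rcases Nat.eq_zero_or_pos m with rfl | hpos
    · exact Or.inl h1
    · right
      obtain ⟨m', rfl⟩ : ∃ m', m = m' + 1 := ⟨m - 1, by omega⟩
      exact ⟨h2 0 (by omega), m', by omega, h1, fun k hk => h2 (k+1) (by omega)⟩
  · rintro (h | ⟨h0, m, hm, h1, h2⟩)
    · exact ⟨0, by omega, h, fun k hk => by
        rw [Nat.le_zero.mp hk, h]; exact fun heq => hac heq.symm⟩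
    · refine ⟨m+1, by omega, h1, fun k hk => ?_⟩
      rcases Nat.eq_zero_or_pos k with rfl | hpos
      · exact h0
      · obtain ⟨k', rfl⟩ : ∃ k', k = k' + 1 := ⟨k - 1, by omega⟩
        exact h2 k' (by omega)

def extF {n : ℕ} (x : Fin (n+1) → ℤ) : ℕ → ℤ :=
  fun k => x ⟨min k n, lt_of_le_of_lt (min_le_right k n) (Nat.lt_succ_self n)⟩

lemma extF_le {n : ℕ} (x : Fin (n+1) → ℤ) {k : ℕ} (h : k ≤ n) :
    extF x k = x ⟨k, by omega⟩ := by
  simp only [extF]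
  congr 1
  exact Fin.ext (by simp [Nat.min_eq_left h])

def cyl (n : ℕ) (x : Fin (n+1) → ℤ) : Set (ℕ → ℤ) := {w | ∀ k : Fin (n+1), w k = x k}

noncomputable def wt (V : ℤ → ℝ) (n : ℕ) (x : Fin (n+1) → ℤ) : ℝ :=
  ∏ k ∈ Finset.range n, stepProb V (extF x k) (extF x (k+1))

lemma wt_nonneg (V : ℤ → ℝ) (n : ℕ) (x : Fin (n+1) → ℤ) : 0 ≤ wt V n x :=
  Finset.prod_nonneg fun k _ => step_nonneg V _ _

lemma cyl_meas (n : ℕ) (x : Fin (n+1) → ℤ) : MeasurableSet (cyl n x) := by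
  have : cyl n x = ⋂ k : Fin (n+1), ((fun w : ℕ → ℤ => w k) ⁻¹' {x k}) := by
    ext w; simp [cyl]
  rw [this]
  exact MeasurableSet.iInter fun k => measurable_pi_apply _ (measurableSet_singleton _)

lemma cyl_disj (n : ℕ) : Pairwise (Function.onFun Disjoint (cyl n)) := by
  intro x y hxy
  rw [Function.onFun, Set.disjoint_left]
  intro w hwx hwy
  exact hxy (funext fun k => (hwx k).symm.trans (hwy k))

section
variable (V : ℤ → ℝ) (P : ℤ → Measure (ℕ → ℤ)) (hP : IsRWInPotential V P)
include hP

lemma P_le_one (b : ℤ) (S : Set (ℕ → ℤ)) : P b S ≤ 1 := by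
  have := hP.1 b
  exact (measure_mono (Set.subset_univ S)).trans (by rw [measure_univ])

lemma P_ne_top (b : ℤ) (S : Set (ℕ → ℤ)) : P b S ≠ ⊤ :=
  fun h => by simpa [h] using P_le_one V P hP b S

lemma P_start (b : ℤ) : P b {w | w 0 = b} = 1 := by
  have h := hP.2 b 0 (fun _ => b) rfl
  simp only [Finset.range_zero, Finset.prod_empty] at h
  have hs : {w : ℕ → ℤ | ∀ k ≤ 0, w k = (fun _ => b) k} = {w : ℕ → ℤ | w 0 = b} := by
    ext w
    simp [Nat.le_zero]
  rw [hs] at h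
  rw [← ENNReal.ofReal_toReal (P_ne_top V P hP b _), h]
  simp

lemma P_nonstart (b : ℤ) : P b {w | w 0 = b}ᶜ = 0 := by
  have hm : MeasurableSet {w : ℕ → ℤ | w 0 = b} := by
    have he : {w : ℕ → ℤ | w 0 = b} = (fun w : ℕ → ℤ => w 0) ⁻¹' {b} := by ext; simp
    rw [he]; exact measurable_pi_apply 0 (measurableSet_singleton b)
  have := hP.1 b
  rw [measure_compl hm (P_ne_top V P hP b _), P_start V P hP b, measure_univ, tsub_self]

lemma P_cyl_eq (b : ℤ) (n : ℕ) (x : Fin (n+1) → ℤ) (hx : x 0 = b) :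
    P b (cyl n x) = ENNReal.ofReal (wt V n x) := by
  have h0 : extF x 0 = b := by rw [extF_le x (Nat.zero_le n)]; exact hx
  have h := hP.2 b n (extF x) h0
  have hs : {w : ℕ → ℤ | ∀ k ≤ n, w k = extF x k} = cyl n x := by
    ext w
    constructor
    · intro hw k
      have h1 := hw (k : ℕ) (by omega)
      rw [extF_le x (by omega)] at h1
      rw [h1]
    · intro hw k hk
      rw [extF_le x hk]
      exact hw ⟨k, by omega⟩
  rw [hs] at h
  rw [← ENNReal.ofReal_toReal (P_ne_top V P hP b _), h]
  rfl

lemma P_cyl_ne (b : ℤ) (n : ℕ) (x : Fin (n+1) → ℤ) (hx : x 0 ≠ b) :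
    P b (cyl n x) = 0 := by
  have hsub : cyl n x ⊆ {w | w 0 = b}ᶜ := by
    intro w hw
    simp only [Set.mem_compl_iff, Set.mem_setOf_eq]
    rw [show (0 : ℕ) = ((0 : Fin (n+1)) : ℕ) from rfl, hw 0]
    exact hx
  exact le_antisymm ((measure_mono hsub).trans_eq (P_nonstart V P hP b)) (zero_le)

open Classical in
lemma P_eq_tsum (b : ℤ) (n : ℕ) (S : Set (ℕ → ℤ)) (C : (Fin (n+1) → ℤ) → Prop)
    (hSC : ∀ w, w ∈ S ↔ C (fun k : Fin (n+1) => w k)) :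
    P b S = ∑' x : Fin (n+1) → ℤ,
      if C x ∧ x 0 = b then ENNReal.ofReal (wt V n x) else 0 := by
  have hS : S = ⋃ x : Fin (n+1) → ℤ, (if C x then cyl n x else ∅) := by
    ext w
    simp only [Set.mem_iUnion]
    constructor
    · intro hw
      refine ⟨fun k => w k, ?_⟩
      rw [if_pos ((hSC w).mp hw)]
      exact fun k => rfl
    · rintro ⟨x, hx⟩
      by_cases hC : C x
      · rw [if_pos hC] at hx
        have : x = fun k : Fin (n+1) => w k := funext fun k => (hx k).symm
        exact (hSC w).mpr (this ▸ hC)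
      · rw [if_neg hC] at hx; exact absurd hx (Set.notMem_empty w)
  rw [hS, measure_iUnion ?_ ?_]
  · congr 1
    ext x
    by_cases hC : C x
    · rw [if_pos hC]
      by_cases hx : x 0 = b
      · rw [if_pos ⟨hC, hx⟩, P_cyl_eq V P hP b n x hx]
      · rw [if_neg (fun h => hx h.2), P_cyl_ne V P hP b n x hx]
    · rw [if_neg hC, if_neg (fun h => hC h.1), measure_empty]
  · intro x y hxy
    simp only [Function.onFun]
    by_cases hCx : C x
    · by_cases hCy : C y
      · rw [if_pos hCx, if_pos hCy]
        exact cyl_disj n hxy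
      · rw [if_neg hCy]
        exact disjoint_bot_right
    · rw [if_neg hCx]
      exact disjoint_bot_left
  · intro x
    by_cases hC : C x
    · rw [if_pos hC]; exact cyl_meas n x
    · rw [if_neg hC]; exact MeasurableSet.empty
end

/-! ### new material -/

open Classical

def CG (a c : ℤ) (n : ℕ) (x : Fin (n+1) → ℤ) : Prop := extF x ∈ Gset a c n

lemma mem_Gset_iff (a c : ℤ) (n : ℕ) (w : ℕ → ℤ) :
    w ∈ Gset a c n ↔ CG a c n (fun k : Fin (n+1) => w k) := by
  refine (Gset_congr a c n (v := w) (w := extF fun k : Fin (n+1) => w k) ?_)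
  intro k hk
  rw [extF_le _ hk]

lemma extF_cons_succ {n : ℕ} (j : ℤ) (y : Fin (n+1) → ℤ) {k : ℕ} (hk : k ≤ n) :
    extF (Fin.cons j y : Fin (n+2) → ℤ) (k+1) = extF y k := by
  rw [extF_le _ (by omega : k + 1 ≤ n + 1), extF_le _ hk]
  exact Fin.cons_succ (α := fun _ : Fin (n+2) => ℤ) j y (⟨k, by omega⟩ : Fin (n+1))

lemma extF_cons_zero {n : ℕ} (j : ℤ) (y : Fin (n+1) → ℤ) :
    extF (Fin.cons j y : Fin (n+2) → ℤ) 0 = j := by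
  rw [extF_le _ (by omega : 0 ≤ n + 1)]
  simp

lemma CG_succ {a c : ℤ} (hac : a ≠ c) (n : ℕ) (j : ℤ) (y : Fin (n+1) → ℤ) :
    CG a c (n+1) (Fin.cons j y) ↔ (j = c ∨ (j ≠ a ∧ CG a c n y)) := by
  rw [CG, Gset_shift hac n _, extF_cons_zero]
  have : ((fun k => extF (Fin.cons j y : Fin (n+2) → ℤ) (k+1)) ∈ Gset a c n)
      ↔ extF y ∈ Gset a c n := by
    apply Gset_congr
    intro k hk
    exact extF_cons_succ j y hk
  rw [this, CG]

lemma wt_succ (V : ℤ → ℝ) (n : ℕ) (j : ℤ) (y : Fin (n+1) → ℤ) :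
    wt V (n+1) (Fin.cons j y) = stepProb V j (y 0) * wt V n y := by
  rw [wt, Finset.prod_range_succ']
  have h0 : stepProb V (extF (Fin.cons j y : Fin (n+2) → ℤ) 0)
      (extF (Fin.cons j y : Fin (n+2) → ℤ) 1) = stepProb V j (y 0) := by
    have ha : extF (Fin.cons j y : Fin (n+2) → ℤ) 1 = y 0 := by
      have h2 := extF_cons_succ j y (Nat.zero_le n)
      rw [extF_le _ (Nat.zero_le n)] at h2
      simpa using h2
    rw [extF_cons_zero, ha]
  have h1 : ∀ k ∈ Finset.range n,
      stepProb V (extF (Fin.cons j y : Fin (n+2) → ℤ) (k+1))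
        (extF (Fin.cons j y : Fin (n+2) → ℤ) (k+1+1))
      = stepProb V (extF y k) (extF y (k+1)) := by
    intro k hk
    have hkn : k ≤ n := by simp at hk; omega
    rw [extF_cons_succ j y hkn, extF_cons_succ j y (by simp at hk; omega : k + 1 ≤ n)]
  rw [Finset.prod_congr rfl h1, h0, mul_comm]
  rfl

def consE (n : ℕ) : (ℤ × (Fin (n+1) → ℤ)) ≃ (Fin (n+2) → ℤ) where
  toFun p := Fin.cons p.1 p.2
  invFun x := (x 0, fun k => x k.succ)
  left_inv p := by
    cases p with
    | mk j y =>
      have h1 : (Fin.cons j y : Fin (n+2) → ℤ) 0 = j := Fin.cons_zero _ _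
      have h2 : (fun k : Fin (n+1) => (Fin.cons j y : Fin (n+2) → ℤ) k.succ) = y :=
        funext fun k => Fin.cons_succ _ _ _
      exact Prod.ext h1 h2
  right_inv x := Fin.cons_self_tail x

lemma prob_G (V : ℤ → ℝ) (P : ℤ → Measure (ℕ → ℤ)) (hP : IsRWInPotential V P)
    {a c : ℤ} (hac : a ≠ c) :
    ∀ n (i : ℤ), (P i (Gset a c n)).toReal = uu V a c n i := by
  intro n
  induction n with
  | zero =>
    intro i
    have hG0 : Gset a c 0 = {w | w 0 = c} := by
      ext w
      simp only [Gset, Set.mem_setOf_eq]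
      constructor
      · rintro ⟨m, hm, h1, _⟩
        rwa [Nat.le_zero.mp hm] at h1
      · intro h
        exact ⟨0, le_refl 0, h, fun k hk => by
          rw [Nat.le_zero.mp hk, h]; exact fun he => hac he.symm⟩
    rw [hG0]
    rcases eq_or_ne i c with hic | hic
    · subst hic
      rw [P_start V P hP i]
      simp [uu]
    · have hsub : {w : ℕ → ℤ | w 0 = c} ⊆ {w : ℕ → ℤ | w 0 = i}ᶜ := by
        intro w hw
        simp only [Set.mem_compl_iff, Set.mem_setOf_eq] at *
        rw [hw]; exact fun h => hic h.symm
      have h0 : P i {w : ℕ → ℤ | w 0 = c} = 0 :=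
        le_antisymm ((measure_mono hsub).trans_eq (P_nonstart V P hP i)) (zero_le)
      rw [h0]
      simp only [uu]
      rw [if_neg hic, ENNReal.toReal_zero]
  | succ n ih =>
    intro i
    rcases eq_or_ne i c with hic | hic
    · subst hic
      have hsub : {w : ℕ → ℤ | w 0 = i} ⊆ Gset a i (n+1) := by
        intro w hw
        exact ⟨0, by omega, hw, fun k hk => by
          rw [Nat.le_zero.mp hk, hw]; exact fun he => hac he.symm⟩
      have h1 : P i (Gset a i (n+1)) = 1 :=
        le_antisymm (P_le_one V P hP _ _)
          ((P_start V P hP i) ▸ measure_mono hsub)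
      rw [h1]
      simp [uu]
    rcases eq_or_ne i a with hia | hia
    · subst hia
      have hsub : Gset i c (n+1) ⊆ {w : ℕ → ℤ | w 0 = i}ᶜ := by
        rintro w ⟨m, hm, h1, h2⟩
        exact h2 0 (by omega)
      have h0 : P i (Gset i c (n+1)) = 0 :=
        le_antisymm ((measure_mono hsub).trans_eq (P_nonstart V P hP i)) (zero_le)
      rw [h0]
      simp [uu, hic]
    -- interior case
    have key := P_eq_tsum V P hP i (n+1) (Gset a c (n+1)) (CG a c (n+1))
      (mem_Gset_iff a c (n+1))
    have e1 : ∑' x : Fin (n+2) → ℤ,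
        (if CG a c (n+1) x ∧ x 0 = i then ENNReal.ofReal (wt V (n+1) x) else 0)
        = ∑' p : ℤ × (Fin (n+1) → ℤ),
          (if CG a c (n+1) (Fin.cons p.1 p.2) ∧ (Fin.cons p.1 p.2 : Fin (n+2) → ℤ) 0 = i
            then ENNReal.ofReal (wt V (n+1) (Fin.cons p.1 p.2)) else 0) :=
      (Equiv.tsum_eq (consE n) _).symm
    rw [e1, ENNReal.tsum_prod (f := fun (j : ℤ) (y : Fin (n+1) → ℤ) =>
      if CG a c (n + 1) (Fin.cons j y) ∧ (Fin.cons j y : Fin (n+2) → ℤ) 0 = i then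
        ENNReal.ofReal (wt V (n + 1) (Fin.cons j y)) else 0)] at key
    have e2 : ∀ (j : ℤ) (y : Fin (n+1) → ℤ),
        (if CG a c (n+1) (Fin.cons j y) ∧ (Fin.cons j y : Fin (n+2) → ℤ) 0 = i
          then ENNReal.ofReal (wt V (n+1) (Fin.cons j y)) else 0)
        = if j = i then
            (if CG a c n y then
              ENNReal.ofReal (stepProb V i (y 0)) * ENNReal.ofReal (wt V n y) else 0)
          else 0 := by
      intro j y
      have hcons0 : (Fin.cons j y : Fin (n+2) → ℤ) 0 = j := Fin.cons_zero _ _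
      by_cases hj : j = i
      · subst hj
        rw [if_pos rfl]
        by_cases hC : CG a c n y
        · have hCG : CG a c (n+1) (Fin.cons j y) :=
            (CG_succ hac n j y).mpr (Or.inr ⟨hia, hC⟩)
          rw [if_pos ⟨hCG, hcons0.trans rfl⟩, if_pos hC, wt_succ,
            ENNReal.ofReal_mul (step_nonneg V _ _)]
        · have hCG : ¬ CG a c (n+1) (Fin.cons j y) := by
            rw [CG_succ hac n j y]
            push_neg
            exact ⟨hic, fun _ => hC⟩
          rw [if_neg (fun h => hCG h.1), if_neg hC]
      · rw [if_neg hj, if_neg (fun h => hj (hcons0.symm.trans h.2))]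
    simp only [e2] at key
    have e3 : ∀ j : ℤ, (∑' y : Fin (n+1) → ℤ,
        if j = i then
          (if CG a c n y then
            ENNReal.ofReal (stepProb V i (y 0)) * ENNReal.ofReal (wt V n y) else 0)
        else 0)
        = if j = i then (∑' y : Fin (n+1) → ℤ,
            (if CG a c n y then
              ENNReal.ofReal (stepProb V i (y 0)) * ENNReal.ofReal (wt V n y) else 0))
          else 0 := by
      intro j
      by_cases hj : j = i <;> simp [hj]
    simp only [e3, tsum_ite_eq] at key
    -- now partition according to y 0
    have e4 : ∀ y : Fin (n+1) → ℤ,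
        (if CG a c n y then
          ENNReal.ofReal (stepProb V i (y 0)) * ENNReal.ofReal (wt V n y) else 0)
        = ∑' j : ℤ, (if y 0 = j then
            (if CG a c n y then
              ENNReal.ofReal (stepProb V i (y 0)) * ENNReal.ofReal (wt V n y) else 0)
          else 0) := by
      intro y
      rw [tsum_eq_single (y 0) (fun j hj => if_neg (fun h => hj h.symm)), if_pos rfl]
    rw [tsum_congr e4, ENNReal.tsum_comm] at key
    have e5 : ∀ j : ℤ, (∑' y : Fin (n+1) → ℤ,
        if y 0 = j then
          (if CG a c n y then
            ENNReal.ofReal (stepProb V i (y 0)) * ENNReal.ofReal (wt V n y) else 0)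
        else 0)
        = ENNReal.ofReal (stepProb V i j) * P j (Gset a c n) := by
      intro j
      rw [P_eq_tsum V P hP j n (Gset a c n) (CG a c n) (mem_Gset_iff a c n),
        ← ENNReal.tsum_mul_left]
      apply tsum_congr
      intro y
      by_cases h0 : y 0 = j
      · by_cases hC : CG a c n y
        · rw [if_pos h0, if_pos hC, if_pos ⟨hC, h0⟩, h0]
        · rw [if_pos h0, if_neg hC, if_neg (fun h => hC h.1), mul_zero]
      · rw [if_neg h0, if_neg (fun h => h0 h.2), mul_zero]
    rw [tsum_congr e5] at key
    -- sum over the two neighbours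
    have e6 : (∑' j : ℤ, ENNReal.ofReal (stepProb V i j) * P j (Gset a c n))
        = ENNReal.ofReal (stepProb V i (i+1)) * P (i+1) (Gset a c n)
          + ENNReal.ofReal (stepProb V i (i-1)) * P (i-1) (Gset a c n) := by
      have hs : ∀ j ∉ ({i+1, i-1} : Finset ℤ),
          ENNReal.ofReal (stepProb V i j) * P j (Gset a c n) = 0 := by
        intro j hj
        simp only [Finset.mem_insert, Finset.mem_singleton] at hj
        push_neg at hj
        rw [step_eq_zero V hj.1 hj.2, ENNReal.ofReal_zero, zero_mul]
      rw [tsum_eq_sum hs, Finset.sum_pair (by omega : i + 1 ≠ i - 1)]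
    rw [e6] at key
    -- take toReal
    have hfin1 : ENNReal.ofReal (stepProb V i (i+1)) * P (i+1) (Gset a c n) ≠ ⊤ :=
      ENNReal.mul_ne_top ENNReal.ofReal_ne_top (P_ne_top V P hP _ _)
    have hfin2 : ENNReal.ofReal (stepProb V i (i-1)) * P (i-1) (Gset a c n) ≠ ⊤ :=
      ENNReal.mul_ne_top ENNReal.ofReal_ne_top (P_ne_top V P hP _ _)
    rw [key, ENNReal.toReal_add hfin1 hfin2, ENNReal.toReal_mul, ENNReal.toReal_mul,
      ENNReal.toReal_ofReal (step_nonneg V _ _), ENNReal.toReal_ofReal (step_nonneg V _ _),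
      ih (i+1), ih (i-1), step_up, step_down]
    simp only [uu]
    rw [if_neg hic, if_neg hia]

lemma event_iff (a c : ℤ) (w : ℕ → ℤ) :
    hittingTime c w < entranceTime a w ↔
      ∃ m, w m = c ∧ ∀ k, 1 ≤ k → k ≤ m → w k ≠ a := by
  constructor
  · intro h
    by_cases hc : ∃ m : ℕ, w m = c
    · have hT : hittingTime c w = (Nat.find hc : ℕ∞) := by
        apply le_antisymm
        · exact sInf_le ⟨Nat.find hc, Nat.find_spec hc, rfl⟩
        · apply le_sInf
          rintro x ⟨m, hm, rfl⟩
          show ((Nat.find hc : ℕ) : ℕ∞) ≤ (m : ℕ∞)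
          exact_mod_cast Nat.find_min' hc hm
      refine ⟨Nat.find hc, Nat.find_spec hc, ?_⟩
      intro k h1k hkm heq
      have hle : entranceTime a w ≤ (k : ℕ∞) := sInf_le ⟨k, ⟨h1k, heq⟩, rfl⟩
      rw [hT] at h
      have h2 : (Nat.find hc : ℕ∞) < (k : ℕ∞) := h.trans_le hle
      have h3 : Nat.find hc < k := by exact_mod_cast h2
      omega
    · exfalso
      have hempty : {m : ℕ | w m = c} = ∅ := by
        ext m; simp only [Set.mem_setOf_eq, Set.mem_empty_iff_false, iff_false]
        exact fun hm => hc ⟨m, hm⟩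
      have : hittingTime c w = ⊤ := by
        rw [hittingTime, hempty]
        simp
      rw [this] at h
      exact not_top_lt h
  · rintro ⟨m, hmc, havoid⟩
    have h1 : hittingTime c w ≤ (m : ℕ∞) := sInf_le ⟨m, hmc, rfl⟩
    have h2 : (m : ℕ∞) < entranceTime a w := by
      have hstep : (m : ℕ∞) < ((m+1 : ℕ) : ℕ∞) := by exact_mod_cast Nat.lt_succ_self m
      refine lt_of_lt_of_le hstep (le_sInf ?_)
      rintro x ⟨k, ⟨h1k, hka⟩, rfl⟩
      have hk : m + 1 ≤ k := by
        by_contra hlt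
        exact havoid k h1k (by omega) hka
      show ((m+1 : ℕ) : ℕ∞) ≤ (k : ℕ∞)
      exact_mod_cast hk
    exact lt_of_le_of_lt h1 h2

lemma uu_tendsto (V : ℤ → ℝ) {a c : ℤ} (hac : a < c) (b : ℤ) (hb : b ∈ Set.Icc a c) :
    Tendsto (fun n => uu V a c n b) atTop (nhds (hh V a c b)) := by
  have h0 : Tendsto (fun n => hh V a c b - uu V a c n b) atTop (nhds 0) :=
    squeeze_zero (fun n => (uu_diff V hac n b hb).1) (fun n => (uu_diff V hac n b hb).2)
      (ss_tendsto V hac b hb)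
  have h1 := (tendsto_const_nhds (x := hh V a c b) (f := atTop)).sub h0
  simpa using h1


/-- for the walk in potential `V` started at `b`, with `a < b ≤ c`,
`P(H_a > H̃_c) = (W b - W a)/(W c - W a)`. -/
theorem ruin_formula (V : ℤ → ℝ) (hV0 : V 0 = 0) (P : ℤ → Measure (ℕ → ℤ))
    (hP : IsRWInPotential V P) (a b c : ℤ) (hab : a < b) (hbc : b ≤ c) :
    (P b {w | hittingTime c w < entranceTime a w}).toReal
      = (Wfun V b - Wfun V a) / (Wfun V c - Wfun V a) := by
  have hac : a < c := lt_of_lt_of_le hab hbc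
  set S : Set (ℕ → ℤ) := {w | w 0 = b} with hS
  set E : Set (ℕ → ℤ) := {w | hittingTime c w < entranceTime a w} with hE
  set U : Set (ℕ → ℤ) := ⋃ n, Gset a c n with hU
  have hSc : P b Sᶜ = 0 := P_nonstart V P hP b
  have hEq : E ∩ S = U ∩ S := by
    ext w
    simp only [hE, hU, hS, Set.mem_inter_iff, Set.mem_setOf_eq, Set.mem_iUnion]
    constructor
    · rintro ⟨hEw, hw0⟩
      obtain ⟨m, hmc, hav⟩ := (event_iff a c w).mp hEw
      refine ⟨⟨m, m, le_refl m, hmc, fun k hk => ?_⟩, hw0⟩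
      rcases Nat.eq_zero_or_pos k with rfl | hpos
      · rw [hw0]; omega
      · exact hav k (by omega) hk
    · rintro ⟨⟨n, m, hm, hmc, hav⟩, hw0⟩
      exact ⟨(event_iff a c w).mpr ⟨m, hmc, fun k h1 h2 => hav k h2⟩, hw0⟩
  have hEU : P b E = P b U := by
    apply le_antisymm
    · calc P b E ≤ P b ((E ∩ S) ∪ Sᶜ) := by
            apply measure_mono
            intro w hw
            by_cases hws : w ∈ S
            · exact Or.inl ⟨hw, hws⟩
            · exact Or.inr hws
        _ ≤ P b (E ∩ S) + P b Sᶜ := measure_union_le _ _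
        _ = P b (U ∩ S) := by rw [hEq, hSc, add_zero]
        _ ≤ P b U := measure_mono Set.inter_subset_left
    · calc P b U ≤ P b ((U ∩ S) ∪ Sᶜ) := by
            apply measure_mono
            intro w hw
            by_cases hws : w ∈ S
            · exact Or.inl ⟨hw, hws⟩
            · exact Or.inr hws
        _ ≤ P b (U ∩ S) + P b Sᶜ := measure_union_le _ _
        _ = P b (E ∩ S) := by rw [hEq, hSc, add_zero]
        _ ≤ P b E := measure_mono Set.inter_subset_left
  have htend : Tendsto (fun n => P b (Gset a c n)) atTop (nhds (P b U)) :=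
    tendsto_measure_iUnion_atTop (Gset_mono a c)
  have htoReal : Tendsto (fun n => (P b (Gset a c n)).toReal) atTop (nhds ((P b U).toReal)) :=
    (ENNReal.tendsto_toReal (P_ne_top V P hP b U)).comp htend
  have htoReal' : Tendsto (fun n => uu V a c n b) atTop (nhds ((P b U).toReal)) := by
    apply htoReal.congr
    intro n
    exact prob_G V P hP (ne_of_lt hac) n b
  have hlim : (P b U).toReal = hh V a c b :=
    tendsto_nhds_unique htoReal'
      (uu_tendsto V hac b ⟨le_of_lt hab, hbc⟩)
  rw [hEU, hlim]
  rfl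
end

section
/- If the potential V satisfies the symmetry V_i = V_{-i-1} - V_{-1} for all i ≥ 0 (symmetry with respect to -1/2), then the escape probabilities from 0 to the right and to the left coincide: P_V(H_0 = ∞ | X_0 = 1) = P_V(H_0 = ∞ | X_0 = -1). -/
open MeasureTheory
open scoped ENNReal NNReal

/- ### Auxiliary material for the proof -/

lemma one_sub_inv_exp (a : ℝ) : 1 - 1 / (1 + Real.exp a) = 1 / (1 + Real.exp (-a)) := by
  have h1 : (1 + Real.exp a) > 0 := by positivity
  have h2 : (1 + Real.exp (-a)) > 0 := by positivity
  have h3 : Real.exp (-a) * Real.exp a = 1 := by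
    rw [← Real.exp_add]; simp
  field_simp
  nlinarith [Real.exp_pos a, Real.exp_pos (-a)]

lemma step_symm_pos (V : ℤ → ℝ)
    (hsym' : ∀ i : ℤ, 0 ≤ i → V i = V (-i - 1) - V (-1))
    (i j : ℤ) (hi : 1 ≤ i) : stepProb V i j = stepProb V (-i) (-j) := by
  have hVm : V (-i) = V (i - 1) + V (-1) := by
    have := hsym' (i - 1) (by omega)
    have h2 : -(i-1) - 1 = -i := by ring
    rw [h2] at this; linarith
  have hVm1 : V (-i - 1) = V i + V (-1) := by
    have := hsym' i (by omega); linarith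
  have hexp : V (-i) - V (-i - 1) = -(V i - V (i - 1)) := by
    rw [hVm, hVm1]; ring
  unfold stepProb
  by_cases h1 : j = i + 1
  · have e1 : ¬ (-j = -i + 1) := by omega
    have e2 : -j = -i - 1 := by omega
    rw [if_pos h1, if_neg e1, if_pos e2, hexp, one_sub_inv_exp, neg_neg]
  · by_cases h2 : j = i - 1
    · have e1 : -j = -i + 1 := by omega
      rw [if_neg h1, if_pos h2, if_pos e1, hexp, one_sub_inv_exp]
    · have e1 : ¬ (-j = -i + 1) := by omega
      have e2 : ¬ (-j = -i - 1) := by omega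
      rw [if_neg h1, if_neg h2, if_neg e1, if_neg e2]

lemma step_symm (V : ℤ → ℝ)
    (hsym' : ∀ i : ℤ, 0 ≤ i → V i = V (-i - 1) - V (-1))
    (i j : ℤ) (hi : i ≠ 0) : stepProb V i j = stepProb V (-i) (-j) := by
  rcases lt_or_gt_of_ne hi with h | h
  · have := step_symm_pos V hsym' (-i) (-j) (by omega)
    simpa using this.symm
  · exact step_symm_pos V hsym' i j h

/-- cylinder set -/
def Cyl (n : ℕ) (v : Fin (n+1) → ℤ) : Set (ℕ → ℤ) :=
  {w | ∀ k : Fin (n+1), w (k : ℕ) = v k}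

noncomputable def extv (n : ℕ) (v : Fin (n+1) → ℤ) : ℕ → ℤ :=
  fun k => v ⟨min k n, Nat.lt_succ_of_le (min_le_right k n)⟩

lemma extv_le (n : ℕ) (v : Fin (n+1) → ℤ) (k : ℕ) (hk : k ≤ n) :
    extv n v k = v ⟨k, Nat.lt_succ_of_le hk⟩ := by
  unfold extv; congr 1; exact Fin.ext (by simp [min_eq_left hk])

lemma cyl_eq (n : ℕ) (v : Fin (n+1) → ℤ) :
    {w : ℕ → ℤ | ∀ k ≤ n, w k = extv n v k} = Cyl n v := by
  ext w
  constructor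
  · intro h k
    have := h k (Nat.lt_succ_iff.mp k.isLt)
    rwa [extv_le n v k (Nat.lt_succ_iff.mp k.isLt)] at this
  · intro h k hk
    rw [extv_le n v k hk]
    exact h ⟨k, Nat.lt_succ_of_le hk⟩

lemma cyl_measurable (n : ℕ) (v : Fin (n+1) → ℤ) : MeasurableSet (Cyl n v) := by
  have : Cyl n v = ⋂ k : Fin (n+1), (fun w : ℕ → ℤ => w (k : ℕ)) ⁻¹' {v k} := by
    ext w; simp [Cyl]
  rw [this]
  exact MeasurableSet.iInter fun k => (measurable_pi_apply _) (measurableSet_singleton _)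

lemma cyl_measure (V : ℤ → ℝ) (P : ℤ → Measure (ℕ → ℤ)) (hP : IsRWInPotential V P)
    (b : ℤ) (n : ℕ) (v : Fin (n+1) → ℤ) (hv0 : v 0 = b) :
    (P b (Cyl n v)).toReal
      = ∏ k ∈ Finset.range n, stepProb V (extv n v k) (extv n v (k + 1)) := by
  rw [← cyl_eq n v]
  exact hP.2 b n (extv n v) (by rw [extv_le n v 0 (Nat.zero_le n)]; exact hv0)

/-- the good event up to time n -/
def Ev (b : ℤ) (n : ℕ) : Set (ℕ → ℤ) :=
  {w | w 0 = b ∧ ∀ m : ℕ, 1 ≤ m → m ≤ n → w m ≠ 0}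

/-- index set for the cylinder decomposition of `Ev b n` -/
def Tset (b : ℤ) (n : ℕ) : Set (Fin (n+1) → ℤ) :=
  {v | v 0 = b ∧ ∀ k : Fin (n+1), 1 ≤ (k : ℕ) → v k ≠ 0}

lemma Ev_eq_iUnion (b : ℤ) (n : ℕ) :
    Ev b n = ⋃ v : Tset b n, Cyl n v.val := by
  ext w
  constructor
  · rintro ⟨h0, h1⟩
    refine Set.mem_iUnion.mpr ⟨⟨fun k => w (k : ℕ), ?_, ?_⟩, ?_⟩
    · simpa using h0
    · intro k hk
      exact h1 k hk (Nat.lt_succ_iff.mp k.isLt)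
    · intro k; rfl
  · intro hw
    obtain ⟨⟨v, hv0, hv1⟩, hw⟩ := Set.mem_iUnion.mp hw
    constructor
    · have := hw (0 : Fin (n+1)); simpa [hv0] using this
    · intro m h1m hmn
      have hlt : m < n + 1 := Nat.lt_succ_of_le hmn
      have := hw ⟨m, hlt⟩
      rw [this]
      exact hv1 ⟨m, hlt⟩ h1m

lemma Ev_measurable (b : ℤ) (n : ℕ) : MeasurableSet (Ev b n) := by
  have : Ev b n = (fun w : ℕ → ℤ => w 0) ⁻¹' {b} ∩
      ⋂ (m : ℕ) (_ : 1 ≤ m) (_ : m ≤ n), ((fun w : ℕ → ℤ => w m) ⁻¹' {0})ᶜ := by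
    ext w; simp [Ev]
  rw [this]
  refine ((measurable_pi_apply _) (measurableSet_singleton _)).inter ?_
  refine MeasurableSet.iInter fun m => MeasurableSet.iInter fun _ => MeasurableSet.iInter fun _ => ?_
  exact ((measurable_pi_apply _) (measurableSet_singleton _)).compl

lemma Ev_measure (P : ℤ → Measure (ℕ → ℤ)) (b : ℤ) (n : ℕ) :
    P b (Ev b n) = ∑' v : Tset b n, P b (Cyl n v.val) := by
  rw [Ev_eq_iUnion]
  refine measure_iUnion ?_ (fun v => cyl_measurable n v.val)
  intro v v' hvv'
  rw [Function.onFun, Set.disjoint_left]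
  intro w hw hw'
  apply hvv'
  apply Subtype.ext
  funext k
  rw [← hw k, ← hw' k]

def negEquiv (b : ℤ) (n : ℕ) : Tset b n ≃ Tset (-b) n where
  toFun v := ⟨fun k => -(v.val k), by simp [Tset, v.prop.1],
    fun k hk => by simpa using v.prop.2 k hk⟩
  invFun v := ⟨fun k => -(v.val k), by simp [Tset, v.prop.1],
    fun k hk => by simpa using v.prop.2 k hk⟩
  left_inv v := by ext k; simp
  right_inv v := by ext k; simp

lemma Ev_symm (V : ℤ → ℝ) (P : ℤ → Measure (ℕ → ℤ)) (hP : IsRWInPotential V P)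
    (hsym' : ∀ i : ℤ, 0 ≤ i → V i = V (-i - 1) - V (-1))
    (b : ℤ) (hb : b ≠ 0) (n : ℕ) :
    P b (Ev b n) = P (-b) (Ev (-b) n) := by
  rw [Ev_measure P b n, Ev_measure P (-b) n]
  set e := negEquiv b n with he
  rw [← Equiv.tsum_eq e (fun v : Tset (-b) n => P (-b) (Cyl n v.val))]
  refine tsum_congr fun v => ?_
  haveI := hP.1 b
  haveI := hP.1 (-b)
  have h1 : P b (Cyl n v.val) ≠ ⊤ := measure_ne_top _ _
  have h2 : P (-b) (Cyl n (e v).val) ≠ ⊤ := measure_ne_top _ _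
  rw [← ENNReal.toReal_eq_toReal_iff' h1 h2]
  rw [cyl_measure V P hP b n v.val v.prop.1, cyl_measure V P hP (-b) n (e v).val (e v).prop.1]
  refine Finset.prod_congr rfl fun k hk => ?_
  have hkn : k < n := Finset.mem_range.mp hk
  have hext : ∀ m : ℕ, extv n (e v).val m = -(extv n v.val m) := fun m => rfl
  rw [hext k, hext (k+1)]
  refine step_symm V hsym' _ _ ?_
  rw [extv_le n v.val k (le_of_lt hkn)]
  rcases Nat.eq_zero_or_pos k with hk0 | hk0
  · subst hk0
    have : (⟨0, Nat.lt_succ_of_le (Nat.zero_le n)⟩ : Fin (n+1)) = 0 := rfl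
    rw [this, v.prop.1]; exact hb
  · exact v.prop.2 _ hk0

lemma escape_eq_iInf (V : ℤ → ℝ) (P : ℤ → Measure (ℕ → ℤ)) (hP : IsRWInPotential V P)
    (b : ℤ) :
    P b {w | entranceTime 0 w = ⊤} = ⨅ n, P b (Ev b n) := by
  have hprob := hP.1 b
  haveI := hprob
  -- the starting point is b a.s.
  have hstart : P b {w : ℕ → ℤ | w 0 = b} = 1 := by
    have h := hP.2 b 0 (fun _ => b) rfl
    simp only [Finset.range_zero, Finset.prod_empty] at h
    have hset : {w : ℕ → ℤ | ∀ k ≤ 0, w k = b} = {w : ℕ → ℤ | w 0 = b} := by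
      ext w; simp [Nat.le_zero]
    rw [hset] at h
    have hne : P b {w : ℕ → ℤ | w 0 = b} ≠ ⊤ := measure_ne_top _ _
    rw [← ENNReal.ofReal_toReal hne, h]; simp
  have hcompl : P b {w : ℕ → ℤ | w 0 = b}ᶜ = 0 := by
    have hm : MeasurableSet {w : ℕ → ℤ | w 0 = b} :=
      measurableSet_eq_fun (measurable_pi_apply 0) measurable_const
    rw [prob_compl_eq_zero_iff hm]
    exact hstart
  have hE : {w : ℕ → ℤ | entranceTime 0 w = ⊤} = {w : ℕ → ℤ | ∀ m : ℕ, 1 ≤ m → w m ≠ 0} := by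
    ext w
    simp only [Set.mem_setOf_eq, entranceTime, sInf_eq_top]
    constructor
    · intro h m h1m hm0
      exact absurd (h _ ⟨m, ⟨h1m, hm0⟩, rfl⟩) (by simp)
    · rintro h a ⟨m, ⟨h1m, hm0⟩, rfl⟩
      exact absurd hm0 (h m h1m)
  rw [hE]
  have hinter : {w : ℕ → ℤ | ∀ m : ℕ, 1 ≤ m → w m ≠ 0} ∩ {w : ℕ → ℤ | w 0 = b}
      = ⋂ n, Ev b n := by
    ext w
    simp only [Set.mem_inter_iff, Set.mem_setOf_eq, Set.mem_iInter]
    constructor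
    · rintro ⟨h1, h0⟩ n
      exact ⟨h0, fun m hm _ => h1 m hm⟩
    · intro h
      exact ⟨fun m hm => (h m).2 m hm le_rfl, (h 0).1⟩
  calc P b {w : ℕ → ℤ | ∀ m : ℕ, 1 ≤ m → w m ≠ 0}
      = P b ({w : ℕ → ℤ | ∀ m : ℕ, 1 ≤ m → w m ≠ 0} ∩ {w : ℕ → ℤ | w 0 = b}) :=
        (measure_inter_conull hcompl).symm
    _ = P b (⋂ n, Ev b n) := by rw [hinter]
    _ = ⨅ n, P b (Ev b n) := by
        refine Directed.measure_iInter (fun n => (Ev_measurable b n).nullMeasurableSet) ?_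
          ⟨0, measure_ne_top _ _⟩
        have hanti : Antitone (Ev b) := by
          intro m n hmn w hw
          exact ⟨hw.1, fun k h1 h2 => hw.2 k h1 (le_trans h2 hmn)⟩
        exact hanti.directed_ge

/-- under the symmetry `V i = V (-i-1) - V (-1)` for all `i ≥ 0`, the
escape probabilities from `0` to the right and to the left coincide. -/
theorem escape_symmetry (V : ℤ → ℝ) (hV0 : V 0 = 0)
    (hsym : ∀ i : ℕ, V (i : ℤ) = V (-(i : ℤ) - 1) - V (-1))
    (P : ℤ → Measure (ℕ → ℤ)) (hP : IsRWInPotential V P) :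
    P 1 {w | entranceTime 0 w = ⊤} = P (-1) {w | entranceTime 0 w = ⊤} := by
  have hsym' : ∀ i : ℤ, 0 ≤ i → V i = V (-i - 1) - V (-1) := by
    intro i hi
    obtain ⟨m, rfl⟩ := Int.eq_ofNat_of_zero_le hi
    exact hsym m
  rw [escape_eq_iInf V P hP 1, escape_eq_iInf V P hP (-1)]
  exact iInf_congr fun n => Ev_symm V P hP hsym' 1 one_ne_zero n
end
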